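/- Along any solution of the PI distributed-optimization dynamics, the curves z and μ are twice differentiable and the Lyapunov function V(t) = (1/2)‖ż(t)‖² + (1/2)‖μ̇(t)‖² is differentiable with derivative V'(t) = -( k_G · f''(z(t))(ż(t), ż(t)) + k_P · ⟨ż(t), L ż(t)⟩ ) ≤ 0 for every t ∈ ℝ; in particular, V is antitone (monotonically nonincreasing) on ℝ. -/

import Mathlib

open Matrix

lemma aux_mono_deriv_nonneg {h : ℝ → ℝ} (hm : Monotone h) {d x : ℝ}
    (hd : HasDerivAt h d x) : 0 ≤ d := by
  have hset : Set.Ioi x \ {x} = Set.Ioi x := by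
    ext y; simp +contextual [ne_of_gt]
  have h1 := (hd.hasDerivWithinAt (s := Set.Ioi x))
  rw [hasDerivWithinAt_iff_tendsto_slope, hset] at h1
  refine ge_of_tendsto h1 ?_
  filter_upwards [self_mem_nhdsWithin] with y hy
  have hxy : x < y := hy
  rw [slope_def_field]
  exact div_nonneg (sub_nonneg.2 (hm hxy.le)) (sub_nonneg.2 hxy.le)

lemma aux_second_deriv_nonneg {X : Type*} [NormedAddCommGroup X] [NormedSpace ℝ X]
    {f : X → ℝ} (hconv : ConvexOn ℝ Set.univ f) (hf : ContDiff ℝ 2 f)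
    (x u : X) : 0 ≤ fderiv ℝ (fderiv ℝ f) x u u := by
  have hF : ContDiff ℝ 1 (fderiv ℝ f) := hf.fderiv_right (by norm_num)
  have hFd : Differentiable ℝ (fderiv ℝ f) := hF.differentiable one_ne_zero
  have hfd : Differentiable ℝ f := hf.differentiable two_ne_zero
  set c : ℝ → X := fun s => x + s • u with hc
  have hcd : ∀ s : ℝ, HasDerivAt c u s := fun s => by
    simpa [hc] using ((hasDerivAt_id s).smul_const u).const_add x
  set g : ℝ → ℝ := fun s => f (c s) with hgdef
  have hg' : ∀ s, HasDerivAt g (fderiv ℝ f (c s) u) s := fun s =>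
    (hfd (c s)).hasFDerivAt.comp_hasDerivAt s (hcd s)
  have hgderiv : deriv g = fun s => fderiv ℝ f (c s) u := funext fun s => (hg' s).deriv
  have hgconv : ConvexOn ℝ Set.univ g := by
    have h1 := hconv.comp_affineMap (AffineMap.lineMap x (x + u))
    have h2 : g = f ∘ (AffineMap.lineMap x (x + u)) := by
      funext s
      simp only [hgdef, hc, Function.comp_apply, AffineMap.lineMap_apply_module]
      congr 1
      rw [sub_smul, smul_add, one_smul]
      abel
    rw [h2]
    simpa using h1
  have hmono : Monotone (deriv g) := by
    have h5 := hgconv.monotoneOn_deriv (fun y _ => ((hg' y).differentiableAt))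
    exact monotoneOn_univ.mp h5
  have h2 : HasDerivAt (fun s => fderiv ℝ f (c s) u) ((fderiv ℝ (fderiv ℝ f) x u) u) 0 := by
    have h3 : HasDerivAt (fun s => fderiv ℝ f (c s)) (fderiv ℝ (fderiv ℝ f) x u) 0 := by
      have h4 := (hFd (c 0)).hasFDerivAt.comp_hasDerivAt 0 (hcd 0)
      have : c 0 = x := by simp [hc]
      rwa [this] at h4
    simpa using h3.clm_apply (hasDerivAt_const 0 u)
  rw [hgderiv] at hmono
  exact aux_mono_deriv_nonneg hmono h2

lemma aux_swap {V E : Type*} [Fintype V] [Fintype E] {n : ℕ}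
    (D : Matrix V E ℝ) (u : V → Fin n → ℝ) (w : E → Fin n → ℝ) :
    ∑ i, ∑ k, u i k * ∑ e, D i e * w e k
      = ∑ e, ∑ k, w e k * ∑ i, D i e * u i k := by
  calc ∑ i, ∑ k, u i k * ∑ e, D i e * w e k
      = ∑ i, ∑ e, ∑ k, u i k * (D i e * w e k) := by
        simp only [Finset.mul_sum]
        exact Finset.sum_congr rfl fun i _ => Finset.sum_comm
    _ = ∑ e, ∑ i, ∑ k, u i k * (D i e * w e k) := Finset.sum_comm
    _ = ∑ e, ∑ k, ∑ i, u i k * (D i e * w e k) :=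
        Finset.sum_congr rfl fun e _ => Finset.sum_comm
    _ = ∑ e, ∑ k, w e k * ∑ i, D i e * u i k := by
        simp only [Finset.mul_sum]
        exact Finset.sum_congr rfl fun e _ => Finset.sum_congr rfl fun k _ =>
          Finset.sum_congr rfl fun i _ => by ring

/-- Along any solution of the PI distributed-optimization dynamics
`ż = -k_G ∇f(z) - k_P (L z) - k_I' (D μ)`, `μ̇ = k_I' (Dᵀ z)`, the curves `z` and `μ`
are twice differentiable and `V(t) = ½‖ż(t)‖² + ½‖μ̇(t)‖²` is differentiable with
`V'(t) = -(k_G · f''(z(t))(ż(t), ż(t)) + k_P · ⟨ż(t), L ż(t)⟩) ≤ 0` for all `t`;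
hence `V` is antitone. -/
theorem pi_distributed_optimization_lyapunov_derivative
    {V E : Type*} [Fintype V] [Fintype E] [Nonempty V] [Nonempty E] [DecidableEq V]
    (G : SimpleGraph V) [DecidableRel G.Adj] (hG : G.Connected)
    (D : Matrix V E ℝ) (hD : D * Dᵀ = G.lapMatrix ℝ)
    (n : ℕ) (hn : 1 ≤ n)
    (f : (V → Fin n → ℝ) → ℝ)
    (hconv : ConvexOn ℝ Set.univ f) (hf : ContDiff ℝ 2 f)
    (gradf : (V → Fin n → ℝ) → (V → Fin n → ℝ))
    (hgrad : ∀ x u, fderiv ℝ f x u = ∑ i, ∑ k, gradf x i k * u i k)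
    (kG kP kI : ℝ) (hkG : 0 < kG) (hkP : 0 < kP) (hkI : 0 < kI)
    (z : ℝ → (V → Fin n → ℝ)) (μ : ℝ → (E → Fin n → ℝ))
    (hz : Differentiable ℝ z) (hμ : Differentiable ℝ μ)
    (hzdyn : ∀ t, deriv z t = fun i k =>
      -kG * gradf (z t) i k - kP * (∑ j, G.lapMatrix ℝ i j * z t j k)
        - kI * ∑ e, D i e * μ t e k)
    (hμdyn : ∀ t, deriv μ t = fun e k => kI * ∑ i, D i e * z t i k) :
    Differentiable ℝ (deriv z) ∧ Differentiable ℝ (deriv μ) ∧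
    (∀ t, HasDerivAt
      (fun s => (1 / 2) * (∑ i, ∑ k, deriv z s i k * deriv z s i k)
        + (1 / 2) * (∑ e, ∑ k, deriv μ s e k * deriv μ s e k))
      (-(kG * iteratedFDeriv ℝ 2 f (z t) ![deriv z t, deriv z t]
        + kP * ∑ i, ∑ k, deriv z t i k * (∑ j, G.lapMatrix ℝ i j * deriv z t j k))) t) ∧
    (∀ t, -(kG * iteratedFDeriv ℝ 2 f (z t) ![deriv z t, deriv z t]
        + kP * ∑ i, ∑ k, deriv z t i k * (∑ j, G.lapMatrix ℝ i j * deriv z t j k)) ≤ 0) ∧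
    Antitone (fun s => (1 / 2) * (∑ i, ∑ k, deriv z s i k * deriv z s i k)
        + (1 / 2) * (∑ e, ∑ k, deriv μ s e k * deriv μ s e k)) := by
  classical
  have hfd : Differentiable ℝ f := hf.differentiable two_ne_zero
  have hF : ContDiff ℝ 1 (fderiv ℝ f) := hf.fderiv_right (by norm_num)
  have hFd : Differentiable ℝ (fderiv ℝ f) := hF.differentiable one_ne_zero
  set b : V → Fin n → (V → Fin n → ℝ) := fun i k => Pi.single i (Pi.single k 1) with hbdef
  -- gradf in terms of fderiv
  have hb : ∀ (x : V → Fin n → ℝ) i k, gradf x i k = fderiv ℝ f x (b i k) := by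
    intro x i k
    rw [hgrad]
    rw [Finset.sum_eq_single i]
    · rw [Finset.sum_eq_single k]
      · simp [hbdef]
      · intro k' _ hk'; simp [hbdef, Pi.single_apply, hk']
      · simp
    · intro i' _ hi'
      apply Finset.sum_eq_zero
      intro k' _
      simp [hbdef, Pi.single_apply, hi']
    · simp
  -- linearity identity
  have hdecomp : ∀ u : V → Fin n → ℝ, u = ∑ i, ∑ k, u i k • b i k := by
    intro u
    funext i' k'
    symm
    simp only [Finset.sum_apply, Pi.smul_apply, smul_eq_mul]
    rw [Finset.sum_eq_single i']
    · rw [Finset.sum_eq_single k']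
      · simp [hbdef]
      · intro k'' _ hk''; simp [hbdef, Pi.single_apply, hk'']
      · simp
    · intro i'' _ hi''
      apply Finset.sum_eq_zero
      intro k'' _
      simp [hbdef, Pi.single_apply, hi'']
    · simp
  have hlin : ∀ (ℓ : (V → Fin n → ℝ) →L[ℝ] ℝ) (u : V → Fin n → ℝ),
      ∑ i, ∑ k, u i k * ℓ (b i k) = ℓ u := by
    intro ℓ u
    conv_rhs => rw [hdecomp u]
    rw [map_sum]
    refine Finset.sum_congr rfl fun i _ => ?_
    rw [map_sum]
    refine Finset.sum_congr rfl fun k _ => ?_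
    rw [ℓ.map_smul, smul_eq_mul]
  -- componentwise derivatives of z and μ
  have hzC : ∀ (j : V) (k : Fin n) (t : ℝ),
      HasDerivAt (fun s => z s j k) (deriv z t j k) t := fun j k t =>
    hasDerivAt_pi.mp (hasDerivAt_pi.mp (hz t).hasDerivAt j) k
  have hμC : ∀ (e : E) (k : Fin n) (t : ℝ),
      HasDerivAt (fun s => μ s e k) (deriv μ t e k) t := fun e k t =>
    hasDerivAt_pi.mp (hasDerivAt_pi.mp (hμ t).hasDerivAt e) k
  -- derivative of gradf components
  have hgradC : ∀ (t : ℝ) (i : V) (k : Fin n),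
      HasDerivAt (fun s => gradf (z s) i k)
        ((fderiv ℝ (fderiv ℝ f) (z t) (deriv z t)) (b i k)) t := by
    intro t i k
    have h3 : HasDerivAt (fun s => fderiv ℝ f (z s))
        (fderiv ℝ (fderiv ℝ f) (z t) (deriv z t)) t :=
      (hFd (z t)).hasFDerivAt.comp_hasDerivAt t (hz t).hasDerivAt
    have h4 := h3.clm_apply (hasDerivAt_const t (b i k))
    have h5 : (fun s => gradf (z s) i k) = fun s => fderiv ℝ f (z s) (b i k) :=
      funext fun s => hb (z s) i k
    rw [h5]
    simpa using h4
  -- second derivative of z components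
  have hzddC : ∀ (t : ℝ) (i : V) (k : Fin n),
      HasDerivAt (fun s => deriv z s i k)
        (-kG * (fderiv ℝ (fderiv ℝ f) (z t) (deriv z t)) (b i k)
          - kP * (∑ j, G.lapMatrix ℝ i j * deriv z t j k)
          - kI * ∑ e, D i e * deriv μ t e k) t := by
    intro t i k
    have hfun : (fun s => deriv z s i k) = fun s =>
        -kG * gradf (z s) i k - kP * (∑ j, G.lapMatrix ℝ i j * z s j k)
          - kI * ∑ e, D i e * μ s e k := by
      funext s; rw [hzdyn s]
    rw [hfun]
    have h1 : HasDerivAt (fun s => ∑ j, G.lapMatrix ℝ i j * z s j k)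
        (∑ j, G.lapMatrix ℝ i j * deriv z t j k) t :=
      HasDerivAt.fun_sum fun j _ => (hzC j k t).const_mul _
    have h2 : HasDerivAt (fun s => ∑ e, D i e * μ s e k)
        (∑ e, D i e * deriv μ t e k) t :=
      HasDerivAt.fun_sum fun e _ => (hμC e k t).const_mul _
    exact (((hgradC t i k).const_mul (-kG)).sub (h1.const_mul kP)).sub (h2.const_mul kI)
  -- second derivative of μ components
  have hμddC : ∀ (t : ℝ) (e : E) (k : Fin n),
      HasDerivAt (fun s => deriv μ s e k) (kI * ∑ i, D i e * deriv z t i k) t := by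
    intro t e k
    have hfun : (fun s => deriv μ s e k) = fun s => kI * ∑ i, D i e * z s i k := by
      funext s; rw [hμdyn s]
    rw [hfun]
    exact (HasDerivAt.fun_sum fun i _ => (hzC i k t).const_mul _).const_mul kI
  -- Differentiability of deriv z and deriv μ
  have hDz : Differentiable ℝ (deriv z) :=
    differentiable_pi.mpr fun i => differentiable_pi.mpr fun k => fun t =>
      (hzddC t i k).differentiableAt
  have hDμ : Differentiable ℝ (deriv μ) :=
    differentiable_pi.mpr fun e => differentiable_pi.mpr fun k => fun t =>
      (hμddC t e k).differentiableAt
  -- iterated derivative identity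
  have hIt : ∀ t, iteratedFDeriv ℝ 2 f (z t) ![deriv z t, deriv z t]
      = fderiv ℝ (fderiv ℝ f) (z t) (deriv z t) (deriv z t) := by
    intro t
    rw [iteratedFDeriv_two_apply]
    simp
  -- laplacian quadratic form nonneg
  have hlap : ∀ (u : V → Fin n → ℝ),
      0 ≤ ∑ i, ∑ k, u i k * ∑ j, G.lapMatrix ℝ i j * u j k := by
    intro u
    rw [Finset.sum_comm]
    apply Finset.sum_nonneg
    intro k _
    have h := (SimpleGraph.posSemidef_lapMatrix ℝ G).dotProduct_mulVec_nonneg (fun i => u i k)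
    simpa [dotProduct, Matrix.mulVec] using h
  -- the key HasDerivAt statement
  have hV : ∀ t, HasDerivAt
      (fun s => (1 / 2) * (∑ i, ∑ k, deriv z s i k * deriv z s i k)
        + (1 / 2) * (∑ e, ∑ k, deriv μ s e k * deriv μ s e k))
      (-(kG * iteratedFDeriv ℝ 2 f (z t) ![deriv z t, deriv z t]
        + kP * ∑ i, ∑ k, deriv z t i k * (∑ j, G.lapMatrix ℝ i j * deriv z t j k))) t := by
    intro t
    set u : V → Fin n → ℝ := deriv z t with hu
    set w : E → Fin n → ℝ := deriv μ t with hw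
    set ℓ : (V → Fin n → ℝ) →L[ℝ] ℝ := fderiv ℝ (fderiv ℝ f) (z t) u with hℓ
    set zdd : V → Fin n → ℝ := fun i k =>
      -kG * ℓ (b i k) - kP * (∑ j, G.lapMatrix ℝ i j * u j k)
        - kI * ∑ e, D i e * w e k with hzdd
    set μdd : E → Fin n → ℝ := fun e k => kI * ∑ i, D i e * u i k with hμdd
    have h1 : HasDerivAt
        (fun s => (1 / 2) * (∑ i, ∑ k, deriv z s i k * deriv z s i k)
          + (1 / 2) * (∑ e, ∑ k, deriv μ s e k * deriv μ s e k))
        ((1 / 2) * (∑ i, ∑ k, (zdd i k * u i k + u i k * zdd i k))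
          + (1 / 2) * (∑ e, ∑ k, (μdd e k * w e k + w e k * μdd e k))) t := by
      refine HasDerivAt.add ?_ ?_
      · exact (HasDerivAt.fun_sum fun i _ => HasDerivAt.fun_sum fun k _ =>
          (hzddC t i k).mul (hzddC t i k)).const_mul _
      · exact (HasDerivAt.fun_sum fun e _ => HasDerivAt.fun_sum fun k _ =>
          (hμddC t e k).mul (hμddC t e k)).const_mul _
    convert h1 using 1
    -- algebra
    have e1 : ∑ i, ∑ k, (zdd i k * u i k + u i k * zdd i k)
        = 2 * ∑ i, ∑ k, u i k * zdd i k := by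
      rw [Finset.mul_sum]
      refine Finset.sum_congr rfl fun i _ => ?_
      rw [Finset.mul_sum]
      refine Finset.sum_congr rfl fun k _ => ?_
      ring
    have e2 : ∑ e, ∑ k, (μdd e k * w e k + w e k * μdd e k)
        = 2 * ∑ e, ∑ k, w e k * μdd e k := by
      rw [Finset.mul_sum]
      refine Finset.sum_congr rfl fun e _ => ?_
      rw [Finset.mul_sum]
      refine Finset.sum_congr rfl fun k _ => ?_
      ring
    rw [e1, e2]
    have e3 : ∑ i, ∑ k, u i k * zdd i k
        = -kG * ℓ u - kP * (∑ i, ∑ k, u i k * ∑ j, G.lapMatrix ℝ i j * u j k)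
          - kI * ∑ i, ∑ k, u i k * ∑ e, D i e * w e k := by
      have : ∀ i k, u i k * zdd i k
          = -kG * (u i k * ℓ (b i k)) - kP * (u i k * ∑ j, G.lapMatrix ℝ i j * u j k)
            - kI * (u i k * ∑ e, D i e * w e k) := by
        intro i k; rw [hzdd]; ring
      simp only [this, Finset.sum_sub_distrib, ← Finset.mul_sum]
      rw [hlin ℓ u]
    have e4 : ∑ e, ∑ k, w e k * μdd e k
        = kI * ∑ e, ∑ k, w e k * ∑ i, D i e * u i k := by
      have : ∀ e k, w e k * μdd e k = kI * (w e k * ∑ i, D i e * u i k) := by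
        intro e k; rw [hμdd]; ring
      simp only [this, ← Finset.mul_sum]
    rw [e3, e4, aux_swap D u w, hIt t]
    ring
  have hnonpos : ∀ t, -(kG * iteratedFDeriv ℝ 2 f (z t) ![deriv z t, deriv z t]
      + kP * ∑ i, ∑ k, deriv z t i k * (∑ j, G.lapMatrix ℝ i j * deriv z t j k)) ≤ 0 := by
    intro t
    rw [neg_nonpos]
    have h2 := aux_second_deriv_nonneg hconv hf (z t) (deriv z t)
    rw [hIt t]
    exact add_nonneg (mul_nonneg hkG.le h2) (mul_nonneg hkP.le (hlap _))
  refine ⟨hDz, hDμ, hV, hnonpos, ?_⟩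
  refine antitone_of_deriv_nonpos (fun s => (hV s).differentiableAt) fun s => ?_
  rw [(hV s).deriv]
  exact hnonpos s
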